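/- The solution of the shifted Lorenz system X' = 10(Y−X), Y' = 28(X−100) − (X−100)(Z−10) − (Y−100), Z' = (X−100)(Y−100) − (8/3)(Z−10) started from any point of the shifted trapping region E' = {(X,Y,Z) : 28(X−100)² + 10(Y−100)² + 10(Z−66)² ≤ 40000} has all three coordinates strictly positive for all t ≥ 0. -/

import Mathlib

/-- Solutions of the shifted Lorenz system started in the shifted trapping ellipsoid
`E' = {28(X−100)² + 10(Y−100)² + 10(Z−66)² ≤ 40000}` have all three coordinates strictly
positive for all `t ≥ 0`. -/
theorem shifted_lorenz_stays_positive
    (X Y Z : ℝ → ℝ)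
    (hX : ∀ t, HasDerivAt X (10 * (Y t - X t)) t)
    (hY : ∀ t, HasDerivAt Y (28 * (X t - 100) - (X t - 100) * (Z t - 10) - (Y t - 100)) t)
    (hZ : ∀ t, HasDerivAt Z ((X t - 100) * (Y t - 100) - (8/3) * (Z t - 10)) t)
    (h0 : 28 * (X 0 - 100)^2 + 10 * (Y 0 - 100)^2 + 10 * (Z 0 - 66)^2 ≤ 40000) :
    ∀ t ≥ (0:ℝ), 0 < X t ∧ 0 < Y t ∧ 0 < Z t := by
  set V : ℝ → ℝ := fun t => 28 * (X t - 100)^2 + 10 * (Y t - 100)^2 + 10 * (Z t - 66)^2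
    with hVdef
  set D : ℝ → ℝ := fun t =>
      28 * (2 * (X t - 100) * (10 * (Y t - X t)))
    + 10 * (2 * (Y t - 100) * (28 * (X t - 100) - (X t - 100) * (Z t - 10) - (Y t - 100)))
    + 10 * (2 * (Z t - 66) * ((X t - 100) * (Y t - 100) - (8/3) * (Z t - 10))) with hDdef
  have hV : ∀ t, HasDerivAt V (D t) t := by
    intro t
    have h1 := (((hX t).sub_const 100).pow 2).const_mul 28
    have h2 := (((hY t).sub_const 100).pow 2).const_mul 10
    have h3 := (((hZ t).sub_const 66).pow 2).const_mul 10
    have := (h1.add h2).add h3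
    refine this.congr_deriv ?_
    simp only [hDdef]
    ring
  set g : ℝ → ℝ := fun t => (V t - 40000) * Real.exp (2 * t) with hgdef
  have hg : ∀ t, HasDerivAt g
      ((D t) * Real.exp (2 * t) + (V t - 40000) * (Real.exp (2 * t) * 2)) t := by
    intro t
    have he : HasDerivAt (fun t : ℝ => Real.exp (2 * t)) (Real.exp (2 * t) * 2) t := by
      simpa using ((hasDerivAt_id t).const_mul 2).exp
    exact ((hV t).sub_const 40000).mul he
  have hkey : ∀ t, D t + 2 * (V t - 40000) ≤ 0 := by
    intro t
    simp only [hDdef, hVdef]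
    nlinarith [sq_nonneg (X t - 100), sq_nonneg (Y t - 100), sq_nonneg (5 * Z t - 106)]
  have hanti : Antitone g := by
    apply antitone_of_deriv_nonpos
    · intro t; exact (hg t).differentiableAt
    · intro t
      rw [(hg t).deriv]
      have hexp : (0:ℝ) < Real.exp (2 * t) := Real.exp_pos _
      have := hkey t
      nlinarith
  intro t ht
  have hgle : g t ≤ g 0 := hanti ht
  have hVt : V t ≤ 40000 := by
    have hexp : (0:ℝ) < Real.exp (2 * t) := Real.exp_pos _
    have hg0 : g 0 ≤ 0 := by
      simp only [hgdef]
      have : V 0 ≤ 40000 := h0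
      nlinarith [Real.exp_pos (2 * (0:ℝ))]
    have h1 : (V t - 40000) * Real.exp (2 * t) ≤ 0 := le_trans hgle hg0
    nlinarith
  simp only [hVdef] at hVt
  refine ⟨?_, ?_, ?_⟩
  · nlinarith [sq_nonneg (Y t - 100), sq_nonneg (Z t - 66), sq_nonneg (X t)]
  · nlinarith [sq_nonneg (X t - 100), sq_nonneg (Z t - 66), sq_nonneg (Y t)]
  · nlinarith [sq_nonneg (X t - 100), sq_nonneg (Y t - 100), sq_nonneg (Z t)]
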